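/- For any positive semidefinite S×S real matrices P₁ and P₂ with P₁ ⪯ P₂ (i.e., P₂ − P₁ is positive semidefinite), and for any S×m real matrix B and m×m positive definite matrix R, the matrix A^T (P₁ − P₁ B (R + B^T P₁ B)^{-1} B^T P₁) A ⪯ A^T (P₂ − P₂ B (R + B^T P₂ B)^{-1} B^T P₂) A for every S×S matrix A. -/
import Mathlib
open Matrix

lemma riccati_key {S m : ℕ} (P : Matrix (Fin S) (Fin S) ℝ) (B : Matrix (Fin S) (Fin m) ℝ)
    (R M : Matrix (Fin m) (Fin m) ℝ)
    (hRdef : R = M - Bᵀ * P * B) (hMt : Mᵀ = M) (hPt : Pᵀ = P)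
    (hdet : IsUnit M.det) (K : Matrix (Fin m) (Fin S) ℝ) :
    Kᵀ * R * K + (1 - B * K)ᵀ * P * (1 - B * K)
      = (P - P * B * M⁻¹ * Bᵀ * P) + (K - M⁻¹ * Bᵀ * P)ᵀ * M * (K - M⁻¹ * Bᵀ * P) := by
  subst hRdef
  simp only [Matrix.sub_mul, Matrix.mul_sub, Matrix.transpose_sub, Matrix.transpose_mul,
    Matrix.transpose_one, Matrix.one_mul, Matrix.mul_one, Matrix.transpose_transpose,
    Matrix.transpose_nonsing_inv, hPt, hMt, Matrix.mul_assoc,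
    Matrix.mul_nonsing_inv_cancel_left _ _ hdet, Matrix.nonsing_inv_mul_cancel_left _ _ hdet,
    Matrix.mul_nonsing_inv _ hdet, Matrix.nonsing_inv_mul _ hdet]
  abel

theorem riccati_map_monotone {S m : ℕ}
    (P₁ P₂ : Matrix (Fin S) (Fin S) ℝ)
    (hP₁ : P₁.PosSemidef) (hP₂ : P₂.PosSemidef)
    (hle : (P₂ - P₁).PosSemidef)
    (B : Matrix (Fin S) (Fin m) ℝ)
    (R : Matrix (Fin m) (Fin m) ℝ) (hR : R.PosDef)
    (A : Matrix (Fin S) (Fin S) ℝ) :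
    (Aᵀ * (P₂ - P₂ * B * (R + Bᵀ * P₂ * B)⁻¹ * Bᵀ * P₂) * A
      - Aᵀ * (P₁ - P₁ * B * (R + Bᵀ * P₁ * B)⁻¹ * Bᵀ * P₁) * A).PosSemidef := by
  set M₁ := R + Bᵀ * P₁ * B with hM₁def
  set M₂ := R + Bᵀ * P₂ * B with hM₂def
  have hsym : ∀ (P : Matrix (Fin S) (Fin S) ℝ), P.PosSemidef → Pᵀ = P := fun P hP => by
    simpa [conjTranspose_eq_transpose_of_trivial] using hP.isHermitian.eq
  have hP₁t := hsym _ hP₁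
  have hP₂t := hsym _ hP₂
  have hBPB₁ : (Bᵀ * P₁ * B).PosSemidef := by
    simpa [conjTranspose_eq_transpose_of_trivial] using hP₁.conjTranspose_mul_mul_same B
  have hBPB₂ : (Bᵀ * P₂ * B).PosSemidef := by
    simpa [conjTranspose_eq_transpose_of_trivial] using hP₂.conjTranspose_mul_mul_same B
  have hM₁ : M₁.PosDef := hR.add_posSemidef hBPB₁
  have hM₂ : M₂.PosDef := hR.add_posSemidef hBPB₂
  have hM₁t : M₁ᵀ = M₁ := by
    simpa [conjTranspose_eq_transpose_of_trivial] using hM₁.isHermitian.eq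
  have hM₂t : M₂ᵀ = M₂ := by
    simpa [conjTranspose_eq_transpose_of_trivial] using hM₂.isHermitian.eq
  have hdet₁ : IsUnit M₁.det := (Matrix.isUnit_iff_isUnit_det _).mp hM₁.isUnit
  have hdet₂ : IsUnit M₂.det := (Matrix.isUnit_iff_isUnit_det _).mp hM₂.isUnit
  set K₁ := M₁⁻¹ * Bᵀ * P₁ with hK₁def
  set K₂ := M₂⁻¹ * Bᵀ * P₂ with hK₂def
  have key₂ := riccati_key P₂ B R M₂ (by rw [hM₂def]; abel) hM₂t hP₂t hdet₂ K₂
  have key₁ := riccati_key P₁ B R M₁ (by rw [hM₁def]; abel) hM₁t hP₁t hdet₁ K₂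
  rw [← hK₂def, sub_self] at key₂
  simp only [Matrix.zero_mul, Matrix.mul_zero, add_zero, Matrix.transpose_zero] at key₂
  rw [← hK₁def] at key₁
  -- the difference identity
  have hD : (P₂ - P₂ * B * M₂⁻¹ * Bᵀ * P₂) - (P₁ - P₁ * B * M₁⁻¹ * Bᵀ * P₁)
      = (1 - B * K₂)ᵀ * (P₂ - P₁) * (1 - B * K₂) + (K₂ - K₁)ᵀ * M₁ * (K₂ - K₁) := by
    rw [← key₂, eq_sub_of_add_eq' key₁.symm]
    simp only [Matrix.mul_sub, Matrix.sub_mul]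
    abel
  rw [show Aᵀ * (P₂ - P₂ * B * M₂⁻¹ * Bᵀ * P₂) * A - Aᵀ * (P₁ - P₁ * B * M₁⁻¹ * Bᵀ * P₁) * A
      = Aᵀ * ((P₂ - P₂ * B * M₂⁻¹ * Bᵀ * P₂) - (P₁ - P₁ * B * M₁⁻¹ * Bᵀ * P₁)) * A by
    simp only [Matrix.mul_sub, Matrix.sub_mul], hD, Matrix.mul_add, Matrix.add_mul]
  have t1 : (Aᵀ * ((1 - B * K₂)ᵀ * (P₂ - P₁) * (1 - B * K₂)) * A).PosSemidef := by
    have := (hle.conjTranspose_mul_mul_same (1 - B * K₂)).conjTranspose_mul_mul_same A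
    simpa [conjTranspose_eq_transpose_of_trivial, Matrix.mul_assoc] using this
  have t2 : (Aᵀ * ((K₂ - K₁)ᵀ * M₁ * (K₂ - K₁)) * A).PosSemidef := by
    have := (hM₁.posSemidef.conjTranspose_mul_mul_same (K₂ - K₁)).conjTranspose_mul_mul_same A
    simpa [conjTranspose_eq_transpose_of_trivial, Matrix.mul_assoc] using this
  have := t1.add t2
  simpa [Matrix.mul_add, Matrix.add_mul, Matrix.mul_assoc] using this
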